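/- On ℝ⁷ with global coordinates (x, y, q, pˣ, pʸ, sˣ, sʸ), consider ω = dx ∧ dy and Θ = (dsˣ − pˣ dq) ∧ dy − (dsʸ − pʸ dq) ∧ dx + dpˣ ∧ dq. Then ker Θ = span(∂/∂pʸ) (as a distribution of vector fields annihilating Θ by contraction), and in particular ker Θ is an integrable (hence not maximally non-integrable) distribution of rank 1. -/
import Mathlib


/-- `ℝ⁷` with coordinates indexed `0:x, 1:y, 2:q, 3:pˣ, 4:pʸ, 5:sˣ, 6:sʸ`. -/
abbrev V7 := Fin 7 → ℝ

/-- The 2-form `Θ = (dsˣ − pˣ dq) ∧ dy − (dsʸ − pʸ dq) ∧ dx + dpˣ ∧ dq` at the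
point `m`, evaluated on the pair of tangent vectors `(u, v)`. -/
def Theta7 (m u v : V7) : ℝ :=
  ((u 5 - m 3 * u 2) * v 1 - (v 5 - m 3 * v 2) * u 1)
  - ((u 6 - m 4 * u 2) * v 0 - (v 6 - m 4 * v 2) * u 0)
  + (u 3 * v 2 - v 3 * u 2)

lemma ker_comps (m v : V7) (h : ∀ w : V7, Theta7 m v w = 0) :
    v 0 = 0 ∧ v 1 = 0 ∧ v 2 = 0 ∧ v 3 = 0 ∧ v 5 = 0 ∧ v 6 = 0 := by
  have h5 := h (Pi.single (5 : Fin 7) 1)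
  have h6 := h (Pi.single (6 : Fin 7) 1)
  have h3 := h (Pi.single (3 : Fin 7) 1)
  have h2 := h (Pi.single (2 : Fin 7) 1)
  have h1 := h (Pi.single (1 : Fin 7) 1)
  have h0 := h (Pi.single (0 : Fin 7) 1)
  simp (config := { decide := true }) [Theta7, Pi.single_apply] at h0 h1 h2 h3 h5 h6
  have hv1 : v 1 = 0 := by linarith
  have hv0 : v 0 = 0 := by linarith
  have hv2 : v 2 = 0 := by linarith
  simp only [hv0, hv1, hv2, mul_zero, zero_mul, sub_zero, zero_sub, add_zero,
    zero_add, neg_eq_zero] at h0 h1 h2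
  have hv3 : v 3 = 0 := by linarith
  have hv5 : v 5 = 0 := by linarith
  have hv6 : v 6 = 0 := by linarith
  exact ⟨hv0, hv1, hv2, hv3, hv5, hv6⟩

lemma comps_ker (m v : V7) (h0 : v 0 = 0) (h1 : v 1 = 0) (h2 : v 2 = 0)
    (h3 : v 3 = 0) (h5 : v 5 = 0) (h6 : v 6 = 0) :
    ∀ w : V7, Theta7 m v w = 0 := by
  intro w
  simp [Theta7, h0, h1, h2, h3, h5, h6]

lemma ker_eq (m : V7) : {v : V7 | ∀ w : V7, Theta7 m v w = 0}
    = (Submodule.span ℝ {Pi.single (4 : Fin 7) (1:ℝ)} : Submodule ℝ V7) := by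
  ext v
  constructor
  · intro h
    obtain ⟨h0, h1, h2, h3, h5, h6⟩ := ker_comps m v h
    rw [SetLike.mem_coe, Submodule.mem_span_singleton]
    refine ⟨v 4, ?_⟩
    funext i
    fin_cases i <;>
      simp [h0, h1, h2, h3, h5, h6, Pi.single_apply]
  · intro h
    rw [SetLike.mem_coe, Submodule.mem_span_singleton] at h
    obtain ⟨c, rfl⟩ := h
    refine comps_ker m _ ?_ ?_ ?_ ?_ ?_ ?_ <;>
      simp [Pi.single_apply]

/-- `ker Θ = ⟨∂/∂pʸ⟩` at every point; this kernel distribution has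
rank 1 and is integrable (closed under Lie brackets of its sections). -/
theorem stmt_16 :
    (∀ m : V7, {v : V7 | ∀ w : V7, Theta7 m v w = 0}
        = (Submodule.span ℝ {Pi.single (4 : Fin 7) (1:ℝ)} : Submodule ℝ V7)) ∧
    Module.finrank ℝ ↥(Submodule.span ℝ ({Pi.single (4 : Fin 7) (1:ℝ)} : Set V7)) = 1 ∧
    (∀ X Y : V7 → V7, Differentiable ℝ X → Differentiable ℝ Y →
      (∀ (m w : V7), Theta7 m (X m) w = 0) →
      (∀ (m w : V7), Theta7 m (Y m) w = 0) →
      ∀ (m w : V7), Theta7 m (fderiv ℝ Y m (X m) - fderiv ℝ X m (Y m)) w = 0) := by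
  refine ⟨ker_eq, ?_, ?_⟩
  · rw [finrank_span_singleton]
    intro h
    have := congrFun h (4 : Fin 7)
    simp at this
  · intro X Y hX hY hXk hYk m w
    -- components of X and Y other than index 4 vanish identically
    have comp_zero : ∀ (Z : V7 → V7), Differentiable ℝ Z →
        (∀ (m w : V7), Theta7 m (Z m) w = 0) →
        ∀ (i : Fin 7), i ≠ 4 → ∀ (u : V7), (fderiv ℝ Z m u) i = 0 := by
      intro Z hZ hZk i hi u
      have hconst : (fun m : V7 => Z m i) = fun _ => (0 : ℝ) := by
        funext n
        obtain ⟨h0, h1, h2, h3, h5, h6⟩ := ker_comps n (Z n) (hZk n)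
        fin_cases i <;> simp_all
      have h1 : HasFDerivAt (⇑(ContinuousLinearMap.proj (R := ℝ) (φ := fun _ : Fin 7 => ℝ) i) ∘ Z)
          ((ContinuousLinearMap.proj i).comp (fderiv ℝ Z m)) m :=
        (ContinuousLinearMap.proj i).hasFDerivAt.comp m (hZ m).hasFDerivAt
      have h2 : HasFDerivAt (⇑(ContinuousLinearMap.proj (R := ℝ) (φ := fun _ : Fin 7 => ℝ) i) ∘ Z)
          (0 : V7 →L[ℝ] ℝ) m := by
        have : ⇑(ContinuousLinearMap.proj (R := ℝ) (φ := fun _ : Fin 7 => ℝ) i) ∘ Z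
            = fun _ : V7 => (0:ℝ) := hconst
        rw [this]; exact hasFDerivAt_const 0 m
      have := h1.unique h2
      calc (fderiv ℝ Z m u) i
          = ((ContinuousLinearMap.proj i).comp (fderiv ℝ Z m)) u := rfl
        _ = (0 : V7 →L[ℝ] ℝ) u := by rw [this]
        _ = 0 := rfl
    have key : ∀ i : Fin 7, i ≠ 4 →
        (fderiv ℝ Y m (X m) - fderiv ℝ X m (Y m)) i = 0 := by
      intro i hi
      have a := comp_zero Y hY hYk i hi (X m)
      have b := comp_zero X hX hXk i hi (Y m)
      simp [a, b]
    exact comps_ker m _ (key 0 (by decide)) (key 1 (by decide)) (key 2 (by decide))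
      (key 3 (by decide)) (key 5 (by decide)) (key 6 (by decide)) w
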